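/- Let U, V, M be real matrices with U^T U = I, V^T V = I, and let H satisfy U^T H V = 0. If ‖U M V^T + H‖_* = ‖M‖_*, then H = 0. -/

import Mathlib

open Matrix

namespace NucAux

variable {m n : Type*} [Fintype m] [Fintype n]

lemma conjT_mul_self_apply (X : Matrix m n ℝ) (j j' : n) :
    (Xᴴ * X) j j' = ∑ i, X i j * X i j' := by
  simp [Matrix.mul_apply, conjTranspose_apply]

lemma trace_conjT_mul [DecidableEq n] (X Y : Matrix m n ℝ) :
    trace (Xᴴ * Y) = ∑ j, ∑ i, X i j * Y i j := by
  simp [Matrix.trace, Matrix.diag, Matrix.mul_apply, conjTranspose_apply]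

lemma trace_conjT_mul_self [DecidableEq n] (X : Matrix m n ℝ) :
    trace (Xᴴ * X) = ∑ j, ∑ i, X i j ^ 2 := by
  simp [Matrix.trace, Matrix.diag, Matrix.mul_apply, sq, transpose_apply]

lemma trace_conjT_mul_self_nonneg [DecidableEq n] (X : Matrix m n ℝ) :
    0 ≤ trace (Xᴴ * X) := by
  rw [trace_conjT_mul_self]
  exact Finset.sum_nonneg fun j _ => Finset.sum_nonneg fun i _ => sq_nonneg _

lemma eq_zero_of_trace_conjT_mul_self [DecidableEq n] (X : Matrix m n ℝ)
    (h : trace (Xᴴ * X) = 0) : X = 0 := by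
  rw [trace_conjT_mul_self] at h
  ext i j
  have h1 : ∀ j ∈ Finset.univ, (0:ℝ) ≤ ∑ i, X i j ^ 2 :=
    fun j _ => Finset.sum_nonneg fun i _ => sq_nonneg _
  have h2 := (Finset.sum_eq_zero_iff_of_nonneg h1).mp h j (Finset.mem_univ j)
  have h3 := (Finset.sum_eq_zero_iff_of_nonneg
    (fun i _ => sq_nonneg (X i j))).mp h2 i (Finset.mem_univ i)
  simpa using pow_eq_zero_iff (n := 2) (by norm_num) |>.mp h3

variable [DecidableEq n]

lemma sandwich (E : Matrix n n ℝ) (hE : Eᴴ * E = 1) (d e : n → ℝ) :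
    (E * diagonal d * Eᴴ) * (E * diagonal e * Eᴴ)
      = E * diagonal (fun i => d i * e i) * Eᴴ := by
  simp only [Matrix.mul_assoc]
  rw [← Matrix.mul_assoc Eᴴ E, hE, Matrix.one_mul,
    ← Matrix.mul_assoc (diagonal d), diagonal_mul_diagonal]

lemma sandwich_conjT (E : Matrix n n ℝ) (d : n → ℝ) :
    (E * diagonal d * Eᴴ)ᴴ = E * diagonal d * Eᴴ := by
  simp [conjTranspose_mul, Matrix.mul_assoc, diagonal_conjTranspose]

lemma compress (F : Matrix n n ℝ) (hF : Fᴴ * F = 1) (d : n → ℝ) :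
    Fᴴ * (F * diagonal d * Fᴴ) * F = diagonal d := by
  simp only [Matrix.mul_assoc]
  rw [hF, Matrix.mul_one, ← Matrix.mul_assoc, hF, Matrix.one_mul]

lemma trace_sandwich (E : Matrix n n ℝ) (hE : Eᴴ * E = 1) (d : n → ℝ) :
    trace (E * diagonal d * Eᴴ) = ∑ i, d i := by
  rw [trace_mul_cycle, hE, Matrix.one_mul, trace_diagonal]

variable {A : Matrix n n ℝ} (hA : A.IsHermitian)

lemma E_conjT_mul_self : (hA.eigenvectorUnitary : Matrix n n ℝ)ᴴ *
    (hA.eigenvectorUnitary : Matrix n n ℝ) = 1 := by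
  rw [← Matrix.star_eq_conjTranspose]
  exact Unitary.coe_star_mul_self hA.eigenvectorUnitary

lemma E_mul_conjT_self : (hA.eigenvectorUnitary : Matrix n n ℝ) *
    (hA.eigenvectorUnitary : Matrix n n ℝ)ᴴ = 1 := by
  rw [← Matrix.star_eq_conjTranspose]
  exact Unitary.coe_mul_star_self hA.eigenvectorUnitary

lemma spectral : A = (hA.eigenvectorUnitary : Matrix n n ℝ) * diagonal hA.eigenvalues *
    (hA.eigenvectorUnitary : Matrix n n ℝ)ᴴ := by
  have := hA.spectral_theorem
  rwa [Unitary.conjStarAlgAut_apply, Matrix.star_eq_conjTranspose] at this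

end NucAux

/-- The nuclear norm of a real matrix: the sum of its singular values,
i.e. the sum of the square roots of the eigenvalues of `Mᵀ * M`. -/
noncomputable def nuclearNorm {m n : Type*} [Fintype m] [Fintype n] [DecidableEq n]
    (M : Matrix m n ℝ) : ℝ :=
  ∑ i, Real.sqrt ((show (Mᵀ * M).IsHermitian by
    rw [← Matrix.conjTranspose_eq_transpose_of_trivial]
    exact Matrix.isHermitian_conjTranspose_mul_self M).eigenvalues i)

theorem stmt_5 {k l m n : Type*} [Fintype k] [Fintype l] [Fintype m] [Fintype n]
    [DecidableEq l] [DecidableEq m] [DecidableEq n]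
    (U : Matrix k m ℝ) (V : Matrix l n ℝ) (M : Matrix m n ℝ) (H : Matrix k l ℝ)
    (hU : Uᵀ * U = 1) (hV : Vᵀ * V = 1) (hH : Uᵀ * H * V = 0)
    (hnorm : nuclearNorm (U * M * Vᵀ + H) = nuclearNorm M) :
    H = 0 := by
  classical
  have hUT : Uᴴ = Uᵀ := conjTranspose_eq_transpose_of_trivial U
  have hVT : Vᴴ = Vᵀ := conjTranspose_eq_transpose_of_trivial V
  have hU' : Uᴴ * U = 1 := by rw [hUT]; exact hU
  have hV' : Vᴴ * V = 1 := by rw [hVT]; exact hV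
  have hH' : Uᴴ * (H * V) = 0 := by rw [hUT, ← Matrix.mul_assoc]; exact hH
  set Z : Matrix k l ℝ := U * M * Vᵀ + H with hZdef
  have hZnorm : nuclearNorm Z = nuclearNorm M := hnorm
  -- U^T Z V = M
  have hZM : Uᴴ * Z * V = M := by
    simp only [hZdef, Matrix.mul_add, Matrix.add_mul, Matrix.mul_assoc, hH', add_zero, ← hVT]
    rw [hV', Matrix.mul_one, ← Matrix.mul_assoc, hU', Matrix.one_mul]
  -- spectral data for M
  have hMh := Matrix.isHermitian_conjTranspose_mul_self M
  set a : n → ℝ := hMh.eigenvalues with ha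
  set E : Matrix n n ℝ := (hMh.eigenvectorUnitary : Matrix n n ℝ) with hE
  have hE1 : Eᴴ * E = 1 := NucAux.E_conjT_mul_self hMh
  have hE2 : E * Eᴴ = 1 := NucAux.E_mul_conjT_self hMh
  have hMspec : Mᴴ * M = E * diagonal a * Eᴴ := NucAux.spectral hMh
  have ha0 : ∀ i, 0 ≤ a i := Matrix.eigenvalues_conjTranspose_mul_self_nonneg M
  set g : n → ℝ := fun i => (Real.sqrt (a i))⁻¹ with hg
  have hga : ∀ i, g i * a i = Real.sqrt (a i) := by
    intro i
    rcases eq_or_lt_of_le (ha0 i) with h | h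
    · simp [hg, ← h]
    · have hs : Real.sqrt (a i) > 0 := Real.sqrt_pos.mpr h
      rw [hg]
      field_simp
      rw [Real.sq_sqrt (ha0 i)]
  set P : Matrix n n ℝ := E * diagonal g * Eᴴ with hP
  set W : Matrix m n ℝ := M * P with hW
  have hPh : Pᴴ = P := NucAux.sandwich_conjT E g
  have hWM : Wᴴ * M = E * diagonal (fun i => g i * a i) * Eᴴ := by
    rw [hW, conjTranspose_mul, hPh, Matrix.mul_assoc, hMspec, hP]
    exact NucAux.sandwich E hE1 g a
  have key1 : trace (Wᴴ * M) = nuclearNorm M := by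
    rw [hWM, NucAux.trace_sandwich E hE1]
    simp only [hga]
    rfl
  -- W^H W
  set ind : n → ℝ := fun i => g i * a i * g i with hind
  have hind01 : ∀ i, ind i = 0 ∨ ind i = 1 := by
    intro i
    rcases eq_or_lt_of_le (ha0 i) with h | h
    · left; simp [hind, hg, ← h]
    · right
      have hs : Real.sqrt (a i) ≠ 0 := ne_of_gt (Real.sqrt_pos.mpr h)
      simp only [hind, hga, hg]
      field_simp
      rw [Real.sq_sqrt (ha0 i)]
  have hWW : Wᴴ * W = E * diagonal ind * Eᴴ := by
    rw [hW, conjTranspose_mul, hPh, Matrix.mul_assoc P Mᴴ (M * P),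
      ← Matrix.mul_assoc Mᴴ M P, ← Matrix.mul_assoc P (Mᴴ * M) P, hMspec, hP,
      NucAux.sandwich E hE1, NucAux.sandwich E hE1]
  set G : Matrix k l ℝ := U * W * Vᴴ with hG
  have hGG : Gᴴ * G = V * (E * diagonal ind * Eᴴ) * Vᴴ := by
    rw [hG, conjTranspose_mul, conjTranspose_mul, conjTranspose_conjTranspose, ← hWW]
    -- (Vᴴᴴ * (Wᴴ * Uᴴ)) * (U * W * Vᴴ) = V * (Wᴴ * W) * Vᴴ
    simp only [Matrix.mul_assoc]
    rw [← Matrix.mul_assoc Uᴴ U, hU', Matrix.one_mul]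
  -- spectral data for Z
  have hZh := Matrix.isHermitian_conjTranspose_mul_self Z
  set μ : l → ℝ := hZh.eigenvalues with hμ
  set F : Matrix l l ℝ := (hZh.eigenvectorUnitary : Matrix l l ℝ) with hF
  have hF1 : Fᴴ * F = 1 := NucAux.E_conjT_mul_self hZh
  have hF2 : F * Fᴴ = 1 := NucAux.E_mul_conjT_self hZh
  have hZspec : Zᴴ * Z = F * diagonal μ * Fᴴ := NucAux.spectral hZh
  have hμ0 : ∀ j, 0 ≤ μ j := Matrix.eigenvalues_conjTranspose_mul_self_nonneg Z
  have hnormZ : nuclearNorm Z = ∑ j, Real.sqrt (μ j) := rfl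
  -- the diagonal sums
  have bsum : ∀ j, ∑ i, (Z * F) i j ^ 2 = μ j := by
    intro j
    have h1 : (Z * F)ᴴ * (Z * F) = diagonal μ := by
      rw [conjTranspose_mul, Matrix.mul_assoc, ← Matrix.mul_assoc Zᴴ Z F,
        ← Matrix.mul_assoc Fᴴ (Zᴴ * Z) F, hZspec, NucAux.compress F hF1]
    have h2 := congrFun (congrFun h1 j) j
    rw [NucAux.conjT_mul_self_apply] at h2
    simpa [sq] using h2
  -- the contraction bound
  set q : n → ℝ := fun i => 1 - ind i with hq
  have hqq : ∀ i, q i * q i = q i := by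
    intro i
    rcases hind01 i with h | h <;> simp [hq, h]
  set S₁ : Matrix l l ℝ := 1 - V * Vᴴ with hS₁
  set S₂ : Matrix n l ℝ := diagonal q * (Eᴴ * Vᴴ) with hS₂
  have hVV : V * Vᴴ * (V * Vᴴ) = V * Vᴴ := by
    rw [Matrix.mul_assoc, ← Matrix.mul_assoc Vᴴ V, hV', Matrix.one_mul]
  have hS1 : S₁ᴴ * S₁ = 1 - V * Vᴴ := by
    have h1 : S₁ᴴ = S₁ := by
      rw [hS₁, conjTranspose_sub, conjTranspose_one, conjTranspose_mul,
        conjTranspose_conjTranspose]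
    rw [h1, hS₁, Matrix.sub_mul, Matrix.mul_sub, Matrix.mul_sub, Matrix.one_mul,
      Matrix.mul_one, hVV]
    abel_nf
    rw [Matrix.one_mul]
  have hS2 : S₂ᴴ * S₂ = V * (E * diagonal q * Eᴴ) * Vᴴ := by
    have h1 : S₂ᴴ = V * E * diagonal q := by
      rw [hS₂, conjTranspose_mul, conjTranspose_mul, conjTranspose_conjTranspose,
        conjTranspose_conjTranspose, diagonal_conjTranspose]
      simp [Matrix.mul_assoc]
    rw [h1, hS₂]
    simp only [Matrix.mul_assoc]
    rw [← Matrix.mul_assoc (diagonal q) (diagonal q), diagonal_mul_diagonal]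
    have : (fun i => q i * q i) = q := funext hqq
    rw [this]
  have hsum1 : Gᴴ * G + (S₁ᴴ * S₁ + S₂ᴴ * S₂) = 1 := by
    rw [hGG, hS1, hS2]
    have hcomb : V * (E * diagonal ind * Eᴴ) * Vᴴ + V * (E * diagonal q * Eᴴ) * Vᴴ
        = V * Vᴴ := by
      rw [← Matrix.add_mul, ← Matrix.mul_add, ← Matrix.add_mul, ← Matrix.mul_add,
        diagonal_add]
      have : (fun i => ind i + q i) = fun _ => (1:ℝ) := by
        funext i; simp [hq]
      rw [this, diagonal_one, Matrix.mul_one, hE2, Matrix.mul_one]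
    rw [← hcomb]
    abel
  have asum : ∀ j, ∑ i, (G * F) i j ^ 2 ≤ 1 := by
    intro j
    have hgrand : (G * F)ᴴ * (G * F) + ((S₁ * F)ᴴ * (S₁ * F) + (S₂ * F)ᴴ * (S₂ * F))
        = 1 := by
      have h1 : (G * F)ᴴ * (G * F) + ((S₁ * F)ᴴ * (S₁ * F) + (S₂ * F)ᴴ * (S₂ * F))
          = Fᴴ * (Gᴴ * G + (S₁ᴴ * S₁ + S₂ᴴ * S₂)) * F := by
        simp only [conjTranspose_mul, Matrix.mul_add, Matrix.add_mul, Matrix.mul_assoc]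
      rw [h1, hsum1, Matrix.mul_one, hF1]
    have h2 := congrFun (congrFun hgrand j) j
    rw [Matrix.add_apply, Matrix.add_apply, NucAux.conjT_mul_self_apply,
      NucAux.conjT_mul_self_apply, NucAux.conjT_mul_self_apply, Matrix.one_apply_eq] at h2
    have n1 : 0 ≤ ∑ i, (S₁ * F) i j * (S₁ * F) i j :=
      Finset.sum_nonneg fun i _ => mul_self_nonneg _
    have n2 : 0 ≤ ∑ i, (S₂ * F) i j * (S₂ * F) i j :=
      Finset.sum_nonneg fun i _ => mul_self_nonneg _
    have : ∑ i, (G * F) i j ^ 2 = ∑ i, (G * F) i j * (G * F) i j := by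
      simp [sq]
    rw [this]
    linarith
  set c : l → ℝ := fun j => ∑ i, (G * F) i j * (Z * F) i j with hc
  have csum : ∑ j, c j = ∑ j, Real.sqrt (μ j) := by
    have h1 : ∑ j, c j = trace ((G * F)ᴴ * (Z * F)) := by
      rw [NucAux.trace_conjT_mul]
    have h2 : (G * F)ᴴ * (Z * F) = Fᴴ * (Gᴴ * Z) * F := by
      rw [conjTranspose_mul]
      simp only [Matrix.mul_assoc]
    have h3 : trace (Fᴴ * (Gᴴ * Z) * F) = trace (Gᴴ * Z) := by
      rw [trace_mul_cycle, ← Matrix.mul_assoc, hF2, Matrix.one_mul]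
    have h4 : Gᴴ * Z = V * Wᴴ * (Uᴴ * Z) := by
      rw [hG, conjTranspose_mul, conjTranspose_mul, conjTranspose_conjTranspose]
      simp only [Matrix.mul_assoc]
    have h5 : trace (V * Wᴴ * (Uᴴ * Z)) = trace (Wᴴ * (Uᴴ * Z * V)) := by
      rw [trace_mul_comm (V * Wᴴ) (Uᴴ * Z), trace_mul_comm Wᴴ (Uᴴ * Z * V)]
      simp only [Matrix.mul_assoc]
    rw [h1, h2, h3, h4, h5, hZM, key1, ← hZnorm, hnormZ]
  have cle : ∀ j, c j ≤ Real.sqrt (μ j) := by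
    intro j
    have h1 := Real.sum_mul_le_sqrt_mul_sqrt Finset.univ
      (fun i => (G * F) i j) (fun i => (Z * F) i j)
    have h2 : Real.sqrt (∑ i, (G * F) i j ^ 2) ≤ 1 := by
      rw [show (1:ℝ) = Real.sqrt 1 by simp]
      exact Real.sqrt_le_sqrt (asum j)
    calc c j ≤ Real.sqrt (∑ i, (G * F) i j ^ 2) * Real.sqrt (∑ i, (Z * F) i j ^ 2) := h1
      _ ≤ 1 * Real.sqrt (∑ i, (Z * F) i j ^ 2) := by
          apply mul_le_mul_of_nonneg_right h2 (Real.sqrt_nonneg _)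
      _ = Real.sqrt (μ j) := by rw [one_mul, bsum j]
  have ceq : ∀ j, c j = Real.sqrt (μ j) := by
    intro j
    have := (Finset.sum_eq_sum_iff_of_le (fun i _ => cle i)).mp csum
    exact this j (Finset.mem_univ j)
  have colZ : ∀ i j, (Z * F) i j = Real.sqrt (μ j) * (G * F) i j := by
    intro i₀ j
    set s : ℝ := Real.sqrt (μ j) with hs
    have hss : s * s = μ j := Real.mul_self_sqrt (hμ0 j)
    have expand : ∀ i, ((Z * F) i j - s * (G * F) i j) ^ 2
        = (Z * F) i j ^ 2 - 2 * s * ((G * F) i j * (Z * F) i j)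
          + (s * s) * (G * F) i j ^ 2 := by
      intro i; ring
    have hsum : ∑ i, ((Z * F) i j - s * (G * F) i j) ^ 2 ≤ 0 := by
      rw [Finset.sum_congr rfl (fun i _ => expand i)]
      rw [Finset.sum_add_distrib, Finset.sum_sub_distrib, ← Finset.mul_sum,
        ← Finset.mul_sum, bsum j]
      have e1 : ∑ i, (G * F) i j * (Z * F) i j = s := ceq j
      rw [e1]
      have h6 : (s * s) * (∑ i, (G * F) i j ^ 2) ≤ μ j * 1 := by
        rw [hss]; exact mul_le_mul_of_nonneg_left (asum j) (hμ0 j)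
      have h7 : 2 * s * s = 2 * μ j := by rw [mul_assoc, hss]
      linarith
    have hzero := (Finset.sum_eq_zero_iff_of_nonneg
      (fun i _ => sq_nonneg ((Z * F) i j - s * (G * F) i j))).mp
      (le_antisymm hsum (Finset.sum_nonneg fun i _ => sq_nonneg _)) i₀ (Finset.mem_univ i₀)
    have := pow_eq_zero_iff (n := 2) (by norm_num) |>.mp hzero
    linarith [this]
  -- Z F = G F D, hence Z = G * Sq
  set D : Matrix l l ℝ := diagonal (fun j => Real.sqrt (μ j)) with hD
  have ZFeq : Z * F = G * F * D := by
    ext i j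
    rw [hD, Matrix.mul_diagonal, colZ i j, mul_comm]
  set Sq : Matrix l l ℝ := F * D * Fᴴ with hSq
  have hSqh : Sqᴴ = Sq := by rw [hSq, hD]; exact NucAux.sandwich_conjT F _
  have hZGSq : Z = G * Sq := by
    calc Z = Z * (F * Fᴴ) := by rw [hF2, Matrix.mul_one]
      _ = (Z * F) * Fᴴ := by rw [Matrix.mul_assoc]
      _ = (G * F * D) * Fᴴ := by rw [ZFeq]
      _ = G * Sq := by rw [hSq]; simp only [Matrix.mul_assoc]
  have hSqSq : Sq * Sq = Zᴴ * Z := by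
    rw [hSq, hD, NucAux.sandwich F hF1]
    have h1 : (fun i => Real.sqrt (μ i) * Real.sqrt (μ i)) = μ :=
      funext fun i => Real.mul_self_sqrt (hμ0 i)
    rw [h1, ← hZspec]
  have hZZ2 : Sq * (Gᴴ * G) * Sq = Zᴴ * Z := by
    have h1 : Zᴴ * Z = (G * Sq)ᴴ * (G * Sq) := by rw [← hZGSq]
    rw [h1, conjTranspose_mul G Sq, hSqh]
    simp only [Matrix.mul_assoc]
  have hkey0 : (S₁ * Sq)ᴴ * (S₁ * Sq) + (S₂ * Sq)ᴴ * (S₂ * Sq) = 0 := by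
    have h1 : (S₁ * Sq)ᴴ * (S₁ * Sq) + (S₂ * Sq)ᴴ * (S₂ * Sq)
        = Sq * (S₁ᴴ * S₁ + S₂ᴴ * S₂) * Sq := by
      simp only [conjTranspose_mul, hSqh, Matrix.mul_add, Matrix.add_mul, Matrix.mul_assoc]
    have h2 : S₁ᴴ * S₁ + S₂ᴴ * S₂ = 1 - Gᴴ * G := eq_sub_of_add_eq' hsum1
    rw [h1, h2, Matrix.mul_sub, Matrix.sub_mul, Matrix.mul_one, hSqSq, hZZ2, sub_self]
  have hS1Sq : S₁ * Sq = 0 := by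
    have tr0 := congrArg trace hkey0
    rw [trace_add, trace_zero] at tr0
    have n1 := NucAux.trace_conjT_mul_self_nonneg (S₁ * Sq)
    have n2 := NucAux.trace_conjT_mul_self_nonneg (S₂ * Sq)
    exact NucAux.eq_zero_of_trace_conjT_mul_self _ (by linarith)
  have hVVSq : V * Vᴴ * Sq = Sq := by
    rw [hS₁] at hS1Sq
    rw [Matrix.sub_mul, Matrix.one_mul] at hS1Sq
    exact (sub_eq_zero.mp hS1Sq).symm
  have hSqVV : Sq * (V * Vᴴ) = Sq := by
    have h1 := congrArg conjTranspose hVVSq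
    rw [conjTranspose_mul (V * Vᴴ) Sq, hSqh, conjTranspose_mul V Vᴴ,
      conjTranspose_conjTranspose] at h1
    exact h1
  have hUG : Uᴴ * G = W * Vᴴ := by
    rw [hG, ← Matrix.mul_assoc Uᴴ (U * W) Vᴴ, ← Matrix.mul_assoc Uᴴ U W, hU',
      Matrix.one_mul]
  have hUMV : U * M * Vᴴ = Z := by
    calc U * M * Vᴴ = U * (Uᴴ * Z * V) * Vᴴ := by rw [hZM]
      _ = U * (Uᴴ * (G * Sq) * V) * Vᴴ := by rw [← hZGSq]
      _ = U * ((W * Vᴴ) * Sq * V) * Vᴴ := by rw [← Matrix.mul_assoc Uᴴ G Sq, hUG]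
      _ = U * (W * (Vᴴ * (Sq * (V * Vᴴ)))) := by simp only [Matrix.mul_assoc]
      _ = U * (W * (Vᴴ * Sq)) := by rw [hSqVV]
      _ = G * Sq := by rw [hG]; simp only [Matrix.mul_assoc]
      _ = Z := hZGSq.symm
  have h9 : U * M * Vᵀ + H = U * M * Vᵀ + 0 := by
    rw [add_zero, ← hZdef, ← hUMV, hVT]
  exact add_left_cancel h9
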